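/- Let a₁, …, aₙ be the vertices of a convex polygon in clockwise order, and let 1 ≤ i < j ≤ k < ℓ < m ≤ n be indices. If dist(a₁,aₘ) ≥ max(dist(a₁,a_k), dist(a_j,aₘ)), then dist(a_i,a_ℓ) > min(dist(a_i,a_k), dist(a_j,a_ℓ)). -/

import Mathlib

/-- The cross product (signed area determinant) of two vectors in the Euclidean plane. -/
noncomputable def cross2 (u v : EuclideanSpace ℝ (Fin 2)) : ℝ := u 0 * v 1 - u 1 * v 0

/-- The vertices `P 0, P 1, …` form a convex polygon listed in clockwise order. -/
def ClockwiseConvexPos {n : ℕ} (P : Fin n → EuclideanSpace ℝ (Fin 2)) : Prop :=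
  ∀ i j k : Fin n, i < j → j < k → cross2 (P j - P i) (P k - P i) < 0

open Complex Real

noncomputable def sarea (a b c : ℂ) : ℝ := ((starRingEnd ℂ) (b - a) * (c - a)).im

noncomputable def cang (a b c : ℂ) : ℝ := Complex.arg ((starRingEnd ℂ) (b - a) * (c - a))

lemma sarea_cycle (a b c : ℂ) : sarea a b c = sarea b c a := by
  simp only [sarea, Complex.mul_im, Complex.sub_re, Complex.sub_im, Complex.conj_re,
    Complex.conj_im, map_sub]
  ring

lemma sarea_nes {a b c : ℂ} (h : sarea a b c < 0) : a ≠ b ∧ b ≠ c ∧ a ≠ c := by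
  refine ⟨?_, ?_, ?_⟩ <;> rintro rfl <;>
    (simp only [sarea, Complex.mul_im, Complex.sub_re, Complex.sub_im, Complex.conj_re,
      Complex.conj_im, map_sub] at h; nlinarith [h])

lemma cang_neg_of {a b c : ℂ} (h : sarea a b c < 0) : cang a b c < 0 :=
  Complex.arg_neg_iff.2 h

lemma cang_gt {a b c : ℂ} : -π < cang a b c := by unfold cang; exact Complex.neg_pi_lt_arg _

lemma cang_self (v x : ℂ) : cang v x x = 0 := by
  unfold cang
  rcases eq_or_ne x v with rfl | h
  · simp
  · rw [show (starRingEnd ℂ) (x - v) * (x - v) = ((Complex.normSq (x - v) : ℝ) : ℂ) by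
      rw [← Complex.mul_conj (x - v)]; ring]
    exact Complex.arg_ofReal_of_nonneg (Complex.normSq_nonneg _)

lemma cang_swap {a b c : ℂ} (h : cang a b c < 0) : cang a c b = -cang a b c := by
  have key : (starRingEnd ℂ) (c - a) * (b - a)
      = (starRingEnd ℂ) ((starRingEnd ℂ) (b - a) * (c - a)) := by
    rw [map_mul, Complex.conj_conj]; ring
  unfold cang at h ⊢
  rw [key, Complex.arg_conj, if_neg (by linarith [Real.pi_pos])]


lemma arg_mul_of_nonpos {z w : ℂ} (hz : z ≠ 0) (hw : w ≠ 0) (hz' : z.arg ≤ 0)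
    (hw' : w.arg ≤ 0) (h : (z * w).arg ≤ 0) : (z * w).arg = z.arg + w.arg := by
  have h1 := Complex.arg_mul_coe_angle hz hw
  rw [← Real.Angle.coe_add] at h1
  obtain ⟨k, hk⟩ := Real.Angle.angle_eq_iff_two_pi_dvd_sub.1 h1
  have hpi := Real.pi_pos
  have b1 := Complex.neg_pi_lt_arg z
  have b2 := Complex.neg_pi_lt_arg w
  have b3 := Complex.neg_pi_lt_arg (z * w)
  have hk1 : (k : ℝ) < 1 := by nlinarith
  have hk2 : (-1 : ℝ) < k := by nlinarith
  have : k = 0 := by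
    have h1' : k < 1 := by exact_mod_cast hk1
    have h2' : (-1 : ℤ) < k := by exact_mod_cast hk2
    omega
  subst this
  simp at hk
  linarith

lemma cang_add {v x y z : ℂ} (hx : x ≠ v) (hy : y ≠ v) (hz : z ≠ v)
    (h1 : cang v x y ≤ 0) (h2 : cang v y z ≤ 0) (h3 : cang v x z ≤ 0) :
    cang v x z = cang v x y + cang v y z := by
  have e1 : (starRingEnd ℂ) (x - v) * (y - v) ≠ 0 :=
    mul_ne_zero ((map_ne_zero _).2 (sub_ne_zero.2 hx)) (sub_ne_zero.2 hy)
  have e2 : (starRingEnd ℂ) (y - v) * (z - v) ≠ 0 :=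
    mul_ne_zero ((map_ne_zero _).2 (sub_ne_zero.2 hy)) (sub_ne_zero.2 hz)
  have hE : ((starRingEnd ℂ) (x - v) * (y - v)) * ((starRingEnd ℂ) (y - v) * (z - v))
      = ((Complex.normSq (y - v) : ℝ) : ℂ) * ((starRingEnd ℂ) (x - v) * (z - v)) := by
    rw [← Complex.mul_conj (y - v)]; ring
  have hpos : (0 : ℝ) < Complex.normSq (y - v) :=
    Complex.normSq_pos.2 (sub_ne_zero.2 hy)
  have hargE : (((starRingEnd ℂ) (x - v) * (y - v)) * ((starRingEnd ℂ) (y - v) * (z - v))).arg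
      = cang v x z := by
    rw [hE, Complex.arg_real_mul _ hpos]; rfl
  have := arg_mul_of_nonpos e1 e2 h1 h2 (by rw [hargE]; exact h3)
  rw [hargE] at this
  exact this

lemma cang_tri {a b c : ℂ} (h : sarea a b c < 0) : cang a b c + cang b c a + cang c a b = -π := by
  have hca : sarea b c a < 0 := by
    have : sarea a b c = sarea b c a := by
      simp only [sarea, Complex.mul_im, Complex.sub_re, Complex.sub_im, Complex.conj_re,
        Complex.conj_im, map_sub]; ring
    linarith
  have hab : sarea c a b < 0 := by
    have : sarea a b c = sarea c a b := by
      simp only [sarea, Complex.mul_im, Complex.sub_re, Complex.sub_im, Complex.conj_re,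
        Complex.conj_im, map_sub]; ring
    linarith
  have him1 : ((starRingEnd ℂ) (b - a) * (c - a)).im < 0 := h
  have him2 : ((starRingEnd ℂ) (c - b) * (a - b)).im < 0 := hca
  have him3 : ((starRingEnd ℂ) (a - c) * (b - c)).im < 0 := hab
  have n1 : (starRingEnd ℂ) (b - a) * (c - a) ≠ 0 := fun h0 => by rw [h0] at him1; simp at him1
  have n2 : (starRingEnd ℂ) (c - b) * (a - b) ≠ 0 := fun h0 => by rw [h0] at him2; simp at him2
  have n3 : (starRingEnd ℂ) (a - c) * (b - c) ≠ 0 := fun h0 => by rw [h0] at him3; simp at him3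
  have hw : ((b - a) * (c - b) * (a - c)) ≠ 0 := by
    intro h0
    rcases mul_eq_zero.1 h0 with h0 | h0
    · rcases mul_eq_zero.1 h0 with h0 | h0
      · rw [sub_eq_zero.1 h0] at him1; simp at him1
      · rw [sub_eq_zero.1 h0] at him2; simp at him2
    · rw [sub_eq_zero.1 h0] at him3; simp at him3
  have hprod : ((starRingEnd ℂ) (b - a) * (c - a)) * ((starRingEnd ℂ) (c - b) * (a - b))
      * ((starRingEnd ℂ) (a - c) * (b - c))
      = ((-(Complex.normSq ((b - a) * (c - b) * (a - c))) : ℝ) : ℂ) := by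
    push_cast
    rw [← Complex.mul_conj ((b - a) * (c - b) * (a - c))]
    simp only [map_mul]
    ring
  have hargp : (((starRingEnd ℂ) (b - a) * (c - a)) * ((starRingEnd ℂ) (c - b) * (a - b))
      * ((starRingEnd ℂ) (a - c) * (b - c))).arg = π := by
    rw [hprod]
    exact Complex.arg_ofReal_of_neg (by simpa using Complex.normSq_pos.2 hw)
  have hc1 := Complex.arg_mul_coe_angle n1 n2
  have hc2 := Complex.arg_mul_coe_angle (mul_ne_zero n1 n2) n3
  rw [hc1, hargp] at hc2
  rw [← Real.Angle.coe_add, ← Real.Angle.coe_add] at hc2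
  obtain ⟨k, hk⟩ := Real.Angle.angle_eq_iff_two_pi_dvd_sub.1 hc2.symm
  have hpi := Real.pi_pos
  have a1 : cang a b c < 0 := Complex.arg_neg_iff.2 him1
  have a2 : cang b c a < 0 := Complex.arg_neg_iff.2 him2
  have a3 : cang c a b < 0 := Complex.arg_neg_iff.2 him3
  have g1 : -π < cang a b c := Complex.neg_pi_lt_arg _
  have g2 : -π < cang b c a := Complex.neg_pi_lt_arg _
  have g3 : -π < cang c a b := Complex.neg_pi_lt_arg _
  have hsum : cang a b c + cang b c a + cang c a b - π = 2 * π * k := hk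
  have hk1 : (k : ℝ) < 0 := by nlinarith
  have hk2 : (-2 : ℝ) < k := by nlinarith
  have : k = -1 := by
    have h1' : k < 0 := by exact_mod_cast hk1
    have h2' : (-2 : ℤ) < k := by exact_mod_cast hk2
    omega
  subst this
  push_cast at hsum
  linarith

lemma comp_algebra {U V W X Y : ℝ} (hU : 0 < U) (hV : 0 < V) (hW : 0 < W)
    (hX : X = U ^ 2 + Y) (hV2 : V ^ 2 = U ^ 2 + 2 * Y + W ^ 2) (htri : U ≤ V + W)
    (hVW : W ≤ V) : 0 ≤ X * W + Y * V := by
  nlinarith [mul_nonneg (sub_nonneg.2 hVW) (by nlinarith : (0 : ℝ) ≤ (V + W) ^ 2 - U ^ 2)]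

lemma cang_comp {a b c : ℂ} (hab : a ≠ b) (hac : a ≠ c) (hbc : b ≠ c)
    (h : ‖c - b‖ ≤ ‖c - a‖) : |cang a b c| ≤ |cang b c a| := by
  have hu : b - a ≠ 0 := sub_ne_zero.2 hab.symm
  have hv : c - a ≠ 0 := sub_ne_zero.2 hac.symm
  have hw : c - b ≠ 0 := sub_ne_zero.2 hbc.symm
  have hu' : a - b ≠ 0 := sub_ne_zero.2 hab
  have e1 : (starRingEnd ℂ) (b - a) * (c - a) ≠ 0 := mul_ne_zero ((map_ne_zero _).2 hu) hv
  have e2 : (starRingEnd ℂ) (c - b) * (a - b) ≠ 0 := mul_ne_zero ((map_ne_zero _).2 hw) hu'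
  set U := ‖b - a‖ with hUdef
  set V := ‖c - a‖ with hVdef
  set W := ‖c - b‖ with hWdef
  have hUp : 0 < U := norm_pos_iff.2 hu
  have hVp : 0 < V := norm_pos_iff.2 hv
  have hWp : 0 < W := norm_pos_iff.2 hw
  set X := ((starRingEnd ℂ) (b - a) * (c - a)).re with hXdef
  set Y := ((starRingEnd ℂ) (b - a) * (c - b)).re with hYdef
  have hX : X = U ^ 2 + Y := by
    simp only [hXdef, hYdef, hUdef, Complex.sq_norm, Complex.normSq_apply, Complex.mul_re,
      Complex.sub_re, Complex.sub_im, Complex.conj_re, Complex.conj_im, map_sub]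
    ring
  have hV2 : V ^ 2 = U ^ 2 + 2 * Y + W ^ 2 := by
    simp only [hYdef, hUdef, hVdef, hWdef, Complex.sq_norm, Complex.normSq_apply, Complex.mul_re,
      Complex.sub_re, Complex.sub_im, Complex.conj_re, Complex.conj_im, map_sub]
    ring
  have htri : U ≤ V + W := by
    have h0 := norm_sub_le_norm_sub_add_norm_sub (c - a) 0 (c - b)
    rw [sub_zero, zero_sub, show (c - a) - (c - b) = b - a by ring,
      show -(c - b) = b - c by ring, norm_sub_rev b c] at h0
    exact h0
  have hE2re : ((starRingEnd ℂ) (c - b) * (a - b)).re = -Y := by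
    simp only [hYdef, Complex.mul_re, Complex.sub_re, Complex.sub_im, Complex.conj_re,
      Complex.conj_im, map_sub]
    ring
  have habs1 : ‖(starRingEnd ℂ) (b - a) * (c - a)‖ = U * V := by
    rw [norm_mul, Complex.norm_conj]
  have habs2 : ‖(starRingEnd ℂ) (c - b) * (a - b)‖ = W * U := by
    rw [norm_mul, Complex.norm_conj, hUdef, norm_sub_rev a b]
  have hcos1 : Real.cos (cang a b c) = X / (U * V) := by
    unfold cang; rw [Complex.cos_arg e1, habs1]
  have hcos2 : Real.cos (cang b c a) = -Y / (W * U) := by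
    unfold cang; rw [Complex.cos_arg e2, habs2, hE2re]
  have key : Real.cos (cang b c a) ≤ Real.cos (cang a b c) := by
    rw [hcos1, hcos2, div_le_div_iff₀ (by positivity) (by positivity)]
    nlinarith [comp_algebra hUp hVp hWp hX hV2 htri h]
  by_contra hcon
  push_neg at hcon
  have i1 : |cang b c a| ∈ Set.Icc 0 π := ⟨abs_nonneg _, Complex.abs_arg_le_pi _⟩
  have i2 : |cang a b c| ∈ Set.Icc 0 π := ⟨abs_nonneg _, Complex.abs_arg_le_pi _⟩
  have := Real.strictAntiOn_cos i1 i2 hcon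
  rw [Real.cos_abs, Real.cos_abs] at this
  linarith

lemma key_contradiction (p b c e f g : ℂ)
    (s1 : sarea p c g < 0) (s2 : sarea b c g < 0) (s3 : sarea b f g < 0)
    (s4 : sarea e f g < 0) (s5 : sarea b c f < 0) (s6 : sarea c f g < 0)
    (s7 : sarea p c f < 0) (s8 : sarea p e g < 0) (s9 : sarea p e f < 0)
    (s10 : sarea b e f < 0) (s11 : sarea b e g < 0)
    (d1 : b = p ∨ sarea p b g < 0) (d2 : b = p ∨ sarea p b c < 0)
    (d3 : b = p ∨ sarea p b e < 0)
    (HA : ‖g - c‖ ≤ ‖g - p‖)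
    (HB : ‖e - p‖ ≤ ‖g - p‖)
    (HC : ‖f - b‖ ≤ ‖e - b‖)
    (HD : ‖f - b‖ ≤ ‖f - c‖) : False := by
  have cyc : ∀ {x y z : ℂ}, sarea x y z < 0 → sarea y z x < 0 := by
    intro x y z h; rwa [← sarea_cycle]
  -- negativity facts
  have n_pcg := cang_neg_of s1
  have n_cgp := cang_neg_of (cyc s1)
  have n_gpc := cang_neg_of (cyc (cyc s1))
  have n_bcg := cang_neg_of s2
  have n_cgb := cang_neg_of (cyc s2)
  have n_gbc := cang_neg_of (cyc (cyc s2))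
  have n_bfg := cang_neg_of s3
  have n_fgb := cang_neg_of (cyc s3)
  have n_gbf := cang_neg_of (cyc (cyc s3))
  have n_efg := cang_neg_of s4
  have n_fge := cang_neg_of (cyc s4)
  have n_gef := cang_neg_of (cyc (cyc s4))
  have n_bcf := cang_neg_of s5
  have n_cfb := cang_neg_of (cyc s5)
  have n_cfg := cang_neg_of s6
  have n_cfp := cang_neg_of (cyc s7)
  have n_egp := cang_neg_of (cyc s8)
  have n_gpe := cang_neg_of (cyc (cyc s8))
  have n_efp := cang_neg_of (cyc s9)
  have n_efb := cang_neg_of (cyc s10)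
  have n_fbe := cang_neg_of (cyc (cyc s10))
  have n_gbe := cang_neg_of (cyc (cyc s11))
  -- distinctness
  obtain ⟨ne_pc, ne_cg, ne_pg⟩ := sarea_nes s1
  obtain ⟨ne_bc, -, ne_bg⟩ := sarea_nes s2
  obtain ⟨ne_bf, ne_fg, -⟩ := sarea_nes s3
  obtain ⟨ne_ef, -, ne_eg⟩ := sarea_nes s4
  obtain ⟨-, ne_cf, -⟩ := sarea_nes s5
  obtain ⟨ne_pe, -, -⟩ := sarea_nes s8
  obtain ⟨ne_be, -, -⟩ := sarea_nes s10
  obtain ⟨-, -, ne_pf⟩ := sarea_nes s9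
  -- degenerate-tolerant nonpositivity
  have m_gpb : cang g p b ≤ 0 := by
    rcases d1 with hbp | hd
    · rw [hbp]; exact le_of_eq (cang_self g p)
    · exact (cang_neg_of (cyc (cyc hd))).le
  have m_cpb : cang c p b ≤ 0 := by
    rcases d2 with hbp | hd
    · rw [hbp]; exact le_of_eq (cang_self c p)
    · exact (cang_neg_of (cyc (cyc hd))).le
  have m_epb : cang e p b ≤ 0 := by
    rcases d3 with hbp | hd
    · rw [hbp]; exact le_of_eq (cang_self e p)
    · exact (cang_neg_of (cyc (cyc hd))).le
  -- additivity
  have E1 : cang b c g = cang b c f + cang b f g :=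
    cang_add ne_bc.symm ne_bf.symm ne_bg.symm n_bcf.le n_bfg.le n_bcg.le
  have E2 : cang c g b = cang c g p + cang c p b :=
    cang_add ne_cg.symm ne_pc ne_bc n_cgp.le m_cpb n_cgb.le
  have E3 : cang c f p = cang c f g + cang c g p :=
    cang_add ne_cf.symm ne_cg.symm ne_pc n_cfg.le n_cgp.le n_cfp.le
  have E4 : cang c f b = cang c f p + cang c p b :=
    cang_add ne_cf.symm ne_pc ne_bc n_cfp.le m_cpb n_cfb.le
  have E5 : cang e f p = cang e f g + cang e g p :=
    cang_add ne_ef.symm ne_eg.symm ne_pe n_efg.le n_egp.le n_efp.le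
  have E6 : cang e f b = cang e f p + cang e p b :=
    cang_add ne_ef.symm ne_pe ne_be n_efp.le m_epb n_efb.le
  have E7 : cang f g e = cang f g b + cang f b e :=
    cang_add ne_fg.symm ne_bf ne_ef n_fgb.le n_fbe.le n_fge.le
  have E8 : cang g p c = cang g p b + cang g b c :=
    cang_add ne_pg ne_bg ne_cg m_gpb n_gbc.le n_gpc.le
  have E9 : cang g b f = cang g b e + cang g e f :=
    cang_add ne_bg ne_eg ne_fg n_gbe.le n_gef.le n_gbf.le
  have E10 : cang g p e = cang g p b + cang g b e :=
    cang_add ne_pg ne_bg ne_eg m_gpb n_gbe.le n_gpe.le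
  -- comparisons
  have cA := cang_comp ne_pc ne_pg ne_cg HA
  rw [abs_of_neg n_pcg, abs_of_neg n_cgp] at cA
  have sA : cang c g p ≤ cang p c g := by linarith
  have cB := cang_comp ne_eg.symm ne_pg.symm ne_pe.symm
    (by rw [norm_sub_rev p e, norm_sub_rev p g]; exact HB)
  rw [cang_swap n_gpe, cang_swap n_egp, abs_neg, abs_neg,
    abs_of_neg n_gpe, abs_of_neg n_egp] at cB
  have sB : cang e g p ≤ cang g p e := by linarith
  have cC := cang_comp ne_ef ne_be.symm ne_bf.symm
    (by rw [norm_sub_rev b f, norm_sub_rev b e]; exact HC)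
  rw [abs_of_neg n_efb, abs_of_neg n_fbe] at cC
  have sC : cang f b e ≤ cang e f b := by linarith
  have cD := cang_comp ne_bc.symm ne_cf ne_bf HD
  rw [cang_swap n_cfb, cang_swap n_bcf, abs_neg, abs_neg,
    abs_of_neg n_cfb, abs_of_neg n_bcf] at cD
  have sD : cang b c f ≤ cang c f b := by linarith
  have T1 := cang_tri s1
  have T2 := cang_tri s2
  have T3 := cang_tri s3
  have T4 := cang_tri s4
  linarith [E1, E2, E3, E4, E5, E6, E7, E8, E9, E10, sA, sB, sC, sD,
    T1, T2, T3, T4, n_cfg, n_efg, m_cpb, m_epb]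

/-- Fact 4 (strengthened Altman lemma): with vertices `a₁ = P 0, …, aₙ = P (n-1)` of a
convex polygon in clockwise order and indices `i < j ≤ k < l < m`, if
`dist a₁ aₘ ≥ max (dist a₁ a_k) (dist a_j aₘ)` then
`dist a_i a_l > min (dist a_i a_k) (dist a_j a_l)`. -/
theorem stmt4 {n : ℕ} [NeZero n] (P : Fin n → EuclideanSpace ℝ (Fin 2))
    (hP : ClockwiseConvexPos P)
    (i j k l m : Fin n) (hij : i < j) (hjk : j ≤ k) (hkl : k < l) (hlm : l < m)
    (h : max (dist (P 0) (P k)) (dist (P j) (P m)) ≤ dist (P 0) (P m)) :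
    min (dist (P i) (P k)) (dist (P j) (P l)) < dist (P i) (P l) := by
  by_contra hcon
  push_neg at hcon
  rw [le_min_iff] at hcon
  obtain ⟨hC', hD'⟩ := hcon
  have h1 : dist (P 0) (P k) ≤ dist (P 0) (P m) := le_trans (le_max_left _ _) h
  have h2 : dist (P j) (P m) ≤ dist (P 0) (P m) := le_trans (le_max_right _ _) h
  set Z : Fin n → ℂ := fun t => ⟨P t 0, P t 1⟩ with hZ
  have hdist : ∀ s t : Fin n, dist (P s) (P t) = ‖Z t - Z s‖ := by
    intro s t
    rw [EuclideanSpace.dist_eq, Complex.norm_def, Complex.normSq_apply]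
    simp only [hZ, Complex.sub_re, Complex.sub_im, Fin.sum_univ_two, Real.dist_eq]
    rw [_root_.sq_abs, _root_.sq_abs]
    congr 1
    ring
  have hS : ∀ r s t : Fin n, r < s → s < t → sarea (Z r) (Z s) (Z t) < 0 := by
    intro r s t h1' h2'
    have hc := hP r s t h1' h2'
    have heq : sarea (Z r) (Z s) (Z t) = cross2 (P s - P r) (P t - P r) := by
      simp only [sarea, cross2, hZ, Complex.mul_im, Complex.sub_re, Complex.sub_im,
        Complex.conj_re, Complex.conj_im, map_sub, PiLp.sub_apply]
      ring
    rw [heq]; exact hc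
  have h0j : (0 : Fin n) < j := lt_of_le_of_lt (Fin.zero_le i) hij
  have hjm : j < m := lt_of_le_of_lt hjk (hkl.trans hlm)
  have hjl : j < l := lt_of_le_of_lt hjk hkl
  have h0k : (0 : Fin n) < k := lt_of_lt_of_le h0j hjk
  have hik : i < k := lt_of_lt_of_le hij hjk
  have hil : i < l := hik.trans hkl
  have him : i < m := hil.trans hlm
  have hkm : k < m := hkl.trans hlm
  have hd : ∀ r : Fin n, (0 : Fin n) < r → ∀ t : Fin n, i < t → (i = 0 → False) →
      True := fun _ _ _ _ _ => trivial
  have ddd : ∀ t : Fin n, i < t → (Z i = Z 0 ∨ sarea (Z 0) (Z i) (Z t) < 0) := by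
    intro t hit
    rcases eq_or_ne i 0 with h0 | h0
    · left; rw [h0]
    · right; exact hS 0 i t (lt_of_le_of_ne (Fin.zero_le i) (Ne.symm h0)) hit
  refine key_contradiction (Z 0) (Z i) (Z j) (Z k) (Z l) (Z m)
    (hS 0 j m h0j hjm) (hS i j m hij hjm) (hS i l m hil hlm) (hS k l m hkl hlm)
    (hS i j l hij hjl) (hS j l m hjl hlm) (hS 0 j l h0j hjl) (hS 0 k m h0k hkm)
    (hS 0 k l h0k hkl) (hS i k l hik hkl) (hS i k m hik hkm)
    (ddd m him) (ddd j hij) (ddd k hik) ?_ ?_ ?_ ?_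
  · rw [← hdist j m, ← hdist 0 m]; exact h2
  · rw [← hdist 0 k, ← hdist 0 m]; exact h1
  · rw [← hdist i l, ← hdist i k]; exact hC'
  · rw [← hdist i l, ← hdist j l]; exact hD'
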